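/- Let W ∈ 𝓕 be an x-integral of the equation u_{xy} = F and let g ∈ R be a symmetry. Then D̄( W_*(g) ) = 0, i.e. the Fréchet derivative of W applied to any symmetry is again an x-integral. -/

import Mathlib

open MvPolynomial

noncomputable section

/-- Variables of the ring R = K[x, y, u₀, u₁, …, ū₁, ū₂, …].
`Var.ubar j` denotes the variable ū_{j+1}, so that `Var.ubar 0 = ū₁`. -/
inductive Var : Type
  | x : Var
  | y : Var
  | u : ℕ → Var
  | ubar : ℕ → Var
  deriving DecidableEq

/-- The ring R. -/
abbrev RR (K : Type*) [CommSemiring K] : Type _ := MvPolynomial Var K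

variable {K : Type*} [Field K] [CharZero K]

/-- The subring 𝓕 ⊆ R of polynomials not involving any ū_j. -/
def Fcal (K : Type*) [CommSemiring K] : Subalgebra K (RR K) :=
  MvPolynomial.supported K {v : Var | ∀ j : ℕ, v ≠ Var.ubar j}

/-- The set of variables that F may involve: x, y, u₀, u₁, ū₁. -/
def Fvars : Set Var := {Var.x, Var.y, Var.u 0, Var.u 1, Var.ubar 0}

/-- `D` and `Dbar` are the total derivatives with respect to x and y on solutions
of u_{xy} = F, i.e. the K-derivations determined by mutual recursion by
D(x) = 1, D(y) = 0, D(uᵢ) = u_{i+1}, D(ū_i) = D̄^{i-1}(F) (i ≥ 1);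
D̄(y) = 1, D̄(x) = 0, D̄(u₀) = ū₁, D̄(u_i) = D^{i-1}(F) (i ≥ 1), D̄(ū_i) = ū_{i+1}.
(Recall `Var.ubar j` denotes ū_{j+1}.)  -/
structure IsTotalDerPair (F : RR K) (D Dbar : Derivation K (RR K) (RR K)) : Prop where
  hDx : D (X Var.x) = 1
  hDy : D (X Var.y) = 0
  hDu : ∀ i : ℕ, D (X (Var.u i)) = X (Var.u (i + 1))
  hDubar : ∀ j : ℕ, D (X (Var.ubar j)) = (⇑Dbar)^[j] F
  hDbary : Dbar (X Var.y) = 1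
  hDbarx : Dbar (X Var.x) = 0
  hDbaru0 : Dbar (X (Var.u 0)) = X (Var.ubar 0)
  hDbaru : ∀ i : ℕ, Dbar (X (Var.u (i + 1))) = (⇑D)^[i] F
  hDbarubar : ∀ j : ℕ, Dbar (X (Var.ubar j)) = X (Var.ubar (j + 1))

/-- `g` is a symmetry of the equation u_{xy} = F:
D(D̄(g)) − F_{u₁}·D(g) − F_{ū₁}·D̄(g) − F_{u₀}·g = 0. -/
def IsSymmetry (F : RR K) (D Dbar : Derivation K (RR K) (RR K)) (g : RR K) : Prop :=
  D (Dbar g) - pderiv (Var.u 1) F * D g - pderiv (Var.ubar 0) F * Dbar g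
    - pderiv (Var.u 0) F * g = 0

/-- The differential operator Σ_{i=0}^k ξ_i·Df^i applied to `a`. -/
def opApply {A : Type*} [CommRing A] (Df : A → A) (ξ : ℕ → A) (k : ℕ) (a : A) : A :=
  ∑ i ∈ Finset.range (k + 1), ξ i * Df^[i] a

/-- `ξ 0, …, ξ k` are the coefficients of an x-symmetry driver of order `k`:
`ξ k ≠ 0` and Σ ξ_i·D^i maps every x-integral to a symmetry. -/
def IsDriver (F : RR K) (D Dbar : Derivation K (RR K) (RR K)) (k : ℕ) (ξ : ℕ → RR K) : Prop :=
  ξ k ≠ 0 ∧ ∀ W : RR K, Dbar W = 0 → IsSymmetry F D Dbar (opApply ⇑D ξ k W)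

/-- The Fréchet derivative a_* = Σ_{i≥0} (∂a/∂uᵢ)·D^i applied to `g`. -/
def frechet (D : Derivation K (RR K) (RR K)) (a g : RR K) : RR K :=
  ∑ᶠ i : ℕ, pderiv (Var.u i) a * (⇑D)^[i] g

/-- The Lie bracket [f, g] = g_*(f) − f_*(g). -/
def lieBracket (D : Derivation K (RR K) (RR K)) (f g : RR K) : RR K :=
  frechet D g f - frechet D f g

/-! ### Auxiliary lemmas for statement9 -/

namespace Statement9Aux

lemma u_inj : Function.Injective Var.u := fun a b h => by cases h; rfl

/-- The function `i ↦ ∂p/∂uᵢ · D^[i] g` has finite support. -/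
lemma supp_fin (D : Derivation K (RR K) (RR K)) (g p : RR K) :
    (Function.support fun i => pderiv (Var.u i) p * (⇑D)^[i] g).Finite := by
  apply Set.Finite.subset
    (Set.Finite.preimage (u_inj.injOn) (p.vars.finite_toSet))
  intro i hi
  simp only [Function.mem_support] at hi
  by_contra h
  exact hi (by rw [pderiv_eq_zero_of_notMem_vars (by simpa using h), zero_mul])

lemma frechet_add (D : Derivation K (RR K) (RR K)) (g p q : RR K) :
    frechet D (p + q) g = frechet D p g + frechet D q g := by
  unfold frechet
  rw [← finsum_add_distrib (supp_fin D g p) (supp_fin D g q)]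
  congr 1; funext i; rw [map_add, add_mul]

lemma frechet_mul (D : Derivation K (RR K) (RR K)) (g p q : RR K) :
    frechet D (p * q) g = p * frechet D q g + q * frechet D p g := by
  unfold frechet
  rw [mul_finsum _ p, mul_finsum _ q,
    ← finsum_add_distrib]
  · congr 1; funext i
    rw [pderiv_mul]; ring
  · apply Set.Finite.subset (supp_fin D g q)
    intro i hi
    simp only [Function.mem_support] at hi ⊢
    intro h; exact hi (by rw [h, mul_zero])
  · apply Set.Finite.subset (supp_fin D g p)
    intro i hi
    simp only [Function.mem_support] at hi ⊢
    intro h; exact hi (by rw [h, mul_zero])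

lemma frechet_C (D : Derivation K (RR K) (RR K)) (g : RR K) (r : K) :
    frechet D (C r) g = 0 := by
  unfold frechet
  apply finsum_eq_zero_of_forall_eq_zero
  intro i; rw [pderiv_C, zero_mul]

lemma frechet_X_u (D : Derivation K (RR K) (RR K)) (g : RR K) (n : ℕ) :
    frechet D (X (Var.u n)) g = (⇑D)^[n] g := by
  unfold frechet
  rw [finsum_eq_single _ n]
  · rw [pderiv_X_self, one_mul]
  · intro j hj
    rw [pderiv_X_of_ne (fun h => hj (u_inj h).symm), zero_mul]

lemma frechet_X_ne (D : Derivation K (RR K) (RR K)) (g : RR K) (v : Var)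
    (hv : ∀ n : ℕ, v ≠ Var.u n) : frechet D (X v) g = 0 := by
  unfold frechet
  apply finsum_eq_zero_of_forall_eq_zero
  intro i; rw [pderiv_X_of_ne (hv i), zero_mul]

/-- A derivation applied to a polynomial supported on `Fvars`. -/
lemma deriv_on_Fvars (d : Derivation K (RR K) (RR K)) (p : RR K)
    (hp : p ∈ MvPolynomial.supported K Fvars) :
    d p = pderiv Var.x p * d (X Var.x) + pderiv Var.y p * d (X Var.y)
        + pderiv (Var.u 0) p * d (X (Var.u 0)) + pderiv (Var.u 1) p * d (X (Var.u 1))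
        + pderiv (Var.ubar 0) p * d (X (Var.ubar 0)) := by
  induction hp using Algebra.adjoin_induction with
  | mem q hq =>
    obtain ⟨v, hv, rfl⟩ := hq
    rcases hv with rfl | rfl | rfl | rfl | rfl <;>
      simp [pderiv_X_self, pderiv_X_of_ne, Var.u.injEq]
  | algebraMap r =>
    have : (algebraMap K (RR K)) r = C r := rfl
    simp [this, pderiv_C]
  | add p q hp hq ihp ihq => rw [map_add, ihp, ihq]; simp only [map_add]; ring
  | mul p q hp hq ihp ihq =>
    rw [Derivation.leibniz, smul_eq_mul, smul_eq_mul, ihp, ihq]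
    simp only [pderiv_mul]; ring

end Statement9Aux

open Statement9Aux in
/-- the Fréchet derivative of an x-integral maps any symmetry to an
x-integral: D̄(W_*(g)) = 0. -/
theorem statement9
    (F : RR K) (hF : F ∈ MvPolynomial.supported K Fvars)
    (D Dbar : Derivation K (RR K) (RR K)) (hDD : IsTotalDerPair F D Dbar)
    (W : RR K) (hWF : W ∈ Fcal K) (hWint : Dbar W = 0)
    (g : RR K) (hg : IsSymmetry F D Dbar g) :
    Dbar (frechet D W g) = 0 := by
  classical
  obtain ⟨hDx, hDy, hDu, hDubar, hDbary, hDbarx, hDbaru0, hDbaru, hDbarubar⟩ := hDD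
  -- D and Dbar commute
  have hbracket : ⁅D, Dbar⁆ = (0 : Derivation K (RR K) (RR K)) := by
    apply MvPolynomial.derivation_ext
    intro v
    cases v with
    | x => simp [Derivation.commutator_apply, hDx, hDbarx]
    | y => simp [Derivation.commutator_apply, hDy, hDbary]
    | u i =>
      cases i with
      | zero =>
        simp [Derivation.commutator_apply, hDu, hDbaru0, hDbaru, hDubar]
      | succ i =>
        simp [Derivation.commutator_apply, hDu, hDbaru, hDubar,
          Function.iterate_succ_apply']
    | ubar j =>
      simp [Derivation.commutator_apply, hDubar, hDbarubar,
        Function.iterate_succ_apply']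
  have hcomm : Function.Commute ⇑D ⇑Dbar := by
    intro a
    have := congrArg (fun d : Derivation K (RR K) (RR K) => d a) hbracket
    simp only [Derivation.commutator_apply] at this
    have h0 : (0 : Derivation K (RR K) (RR K)) a = 0 := rfl
    rw [h0] at this
    exact (sub_eq_zero.mp this)
  -- the evolutionary derivation E
  set f : Var → RR K := fun v =>
    match v with
    | Var.x => 0
    | Var.y => 0
    | Var.u i => (⇑D)^[i] g
    | Var.ubar j => (⇑Dbar)^[j + 1] g with hf
  set E : Derivation K (RR K) (RR K) := mkDerivation K f with hE
  have hEx : E (X Var.x) = 0 := mkDerivation_X K f Var.x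
  have hEy : E (X Var.y) = 0 := mkDerivation_X K f Var.y
  have hEu : ∀ i, E (X (Var.u i)) = (⇑D)^[i] g := fun i => mkDerivation_X K f (Var.u i)
  have hEubar : ∀ j, E (X (Var.ubar j)) = (⇑Dbar)^[j + 1] g :=
    fun j => mkDerivation_X K f (Var.ubar j)
  -- E F = D (Dbar g) using the symmetry
  have hEF : E F = D (Dbar g) := by
    rw [deriv_on_Fvars E F hF, hEx, hEy, hEu 0, hEu 1, hEubar 0]
    have := hg
    unfold IsSymmetry at this
    have h1 : D (Dbar g) = pderiv (Var.u 1) F * D g + pderiv (Var.ubar 0) F * Dbar g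
        + pderiv (Var.u 0) F * g := by linear_combination this
    rw [h1]
    simp only [Function.iterate_zero, id_eq, Function.iterate_one, Nat.zero_add]
    ring
  -- the set of variables not of the form ubar (j+1)
  set S1 : Set Var := {v : Var | ∀ j : ℕ, v ≠ Var.ubar (j + 1)} with hS1
  -- [E, D] vanishes on X v for v ∈ S1
  have hC1X : ∀ v ∈ S1, ⁅E, D⁆ (X v) = 0 := by
    intro v hv
    rw [Derivation.commutator_apply]
    cases v with
    | x => simp [hDx, hEx]
    | y => simp [hDy, hEy]
    | u i =>
      simp [hDu, hEu, Function.iterate_succ_apply']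
    | ubar j =>
      cases j with
      | zero =>
        simp [hDubar, hEubar, hEF, Function.iterate_zero, Function.iterate_one, id_eq]
      | succ j => exact absurd rfl (hv j)
  -- D maps supported S1 to supported S1
  have hDS1 : ∀ p ∈ MvPolynomial.supported K S1, D p ∈ MvPolynomial.supported K S1 := by
    intro p hp
    induction hp using Algebra.adjoin_induction with
    | mem q hq =>
      obtain ⟨v, hv, rfl⟩ := hq
      cases v with
      | x => rw [hDx]; exact one_mem _
      | y => rw [hDy]; exact zero_mem _
      | u i =>
        rw [hDu]
        exact MvPolynomial.X_mem_supported.2 (fun j => by simp)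
      | ubar j =>
        cases j with
        | zero =>
          rw [hDubar, Function.iterate_zero, id_eq]
          exact MvPolynomial.supported_mono
            (by intro w hw; rcases hw with rfl | rfl | rfl | rfl | rfl <;> simp [hS1]) hF
        | succ j => exact absurd rfl (hv j)
    | algebraMap r =>
      have : (algebraMap K (RR K)) r = C r := rfl
      rw [this, MvPolynomial.derivation_C]; exact zero_mem _
    | add p q hp hq ihp ihq => rw [map_add]; exact add_mem ihp ihq
    | mul p q hp hq ihp ihq =>
      rw [Derivation.leibniz, smul_eq_mul, smul_eq_mul]
      exact add_mem (mul_mem hp ihq) (mul_mem hq ihp)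
  have hFS1 : F ∈ MvPolynomial.supported K S1 :=
    MvPolynomial.supported_mono
      (by intro w hw; rcases hw with rfl | rfl | rfl | rfl | rfl <;> simp [hS1]) hF
  have hDiFS1 : ∀ i : ℕ, (⇑D)^[i] F ∈ MvPolynomial.supported K S1 := by
    intro i
    induction i with
    | zero => exact hFS1
    | succ i ih => rw [Function.iterate_succ_apply']; exact hDS1 _ ih
  -- [E, D] vanishes on anything supported on S1
  have hC1 : ∀ p ∈ MvPolynomial.supported K S1, ⁅E, D⁆ p = 0 := by
    intro p hp
    apply MvPolynomial.derivation_eq_zero_of_forall_mem_vars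
    intro v hv
    exact hC1X v (MvPolynomial.mem_supported.1 hp hv)
  -- E commutes with D on iterates of F
  have hA : ∀ i : ℕ, E ((⇑D)^[i] F) = (⇑D)^[i] (E F) := by
    intro i
    induction i with
    | zero => rfl
    | succ i ih =>
      rw [Function.iterate_succ_apply', Function.iterate_succ_apply', ← ih]
      have h := hC1 _ (hDiFS1 i)
      rw [Derivation.commutator_apply] at h
      exact sub_eq_zero.mp h
  -- [E, Dbar] vanishes on X v for v not a ubar variable
  have hC2X : ∀ v : Var, (∀ j : ℕ, v ≠ Var.ubar j) → ⁅E, Dbar⁆ (X v) = 0 := by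
    intro v hv
    rw [Derivation.commutator_apply]
    cases v with
    | x => simp [hDbarx, hEx]
    | y => simp [hDbary, hEy]
    | u i =>
      cases i with
      | zero =>
        simp [hDbaru0, hEubar, hEu, Function.iterate_zero, id_eq, Function.iterate_one]
      | succ i =>
        have h2 : Dbar ((⇑D)^[i + 1] g) = (⇑D)^[i + 1] (Dbar g) :=
          (hcomm.symm.iterate_right (i + 1)) g
        rw [hDbaru, hEu, hA i, hEF, h2, ← Function.iterate_succ_apply, sub_self]
    | ubar j => exact absurd rfl (hv j)
  -- E W = frechet D W g
  have hEW : ∀ p ∈ Fcal K, E p = frechet D p g := by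
    intro p hp
    rw [Fcal] at hp
    induction hp using Algebra.adjoin_induction with
    | mem q hq =>
      obtain ⟨v, hv, rfl⟩ := hq
      cases v with
      | x => rw [hEx, frechet_X_ne D g _ (fun n h => by cases h)]
      | y => rw [hEy, frechet_X_ne D g _ (fun n h => by cases h)]
      | u i => rw [hEu, frechet_X_u]
      | ubar j => exact absurd rfl (hv j)
    | algebraMap r =>
      have : (algebraMap K (RR K)) r = C r := rfl
      rw [this, MvPolynomial.derivation_C, frechet_C]
    | add p q hp hq ihp ihq => rw [map_add, frechet_add, ihp, ihq]
    | mul p q hp hq ihp ihq =>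
      rw [Derivation.leibniz, smul_eq_mul, smul_eq_mul, frechet_mul, ihp, ihq]
  -- conclude
  have hC2W : ⁅E, Dbar⁆ W = 0 := by
    apply MvPolynomial.derivation_eq_zero_of_forall_mem_vars
    intro v hv
    have hvmem : v ∈ {v : Var | ∀ j : ℕ, v ≠ Var.ubar j} := by
      rw [Fcal, MvPolynomial.mem_supported] at hWF
      exact hWF hv
    exact hC2X v hvmem
  rw [Derivation.commutator_apply] at hC2W
  rw [← hEW W hWF, ← sub_eq_zero.mp hC2W, hWint, map_zero]

end
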